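/- Let X be a Tychonoff space. For every open set U ⊆ βX, the set {μ ∈ R_min(X) : S(μ) ⊆ U} is open in R_min(X) with the topology of pointwise convergence; that is, the set-valued support map μ ↦ S(μ) on R_min(X) is upper semicontinuous. -/

import Mathlib

open Set

/-- The Čech–Stone extension `βf : βX → ℝ` of a bounded continuous function `f : X → ℝ`
(obtained by extending `f`, viewed as a map into the compact interval `[-‖f‖, ‖f‖]`,
over the Stone–Čech compactification). -/
noncomputable def betaExt {X : Type*} [TopologicalSpace X] (f : BoundedContinuousFunction X ℝ) :
    StoneCech X → ℝ :=
  Subtype.val ∘ stoneCechExtend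
    (Continuous.subtype_mk f.continuous
      (fun x => Set.mem_Icc.mpr (abs_le.mp (Real.norm_eq_abs (f x) ▸ f.norm_coe_le_norm x)))
      : Continuous fun x => (⟨f x, _⟩ : Set.Icc (-‖f‖) ‖f‖))

variable {X : Type*} [TopologicalSpace X]

/-- `μ` is *normed*: `μ 1 = 1`. -/
def BNormed (μ : BoundedContinuousFunction X ℝ → ℝ) : Prop := μ 1 = 1

/-- `μ` is *weakly additive*: `μ (f + c·1) = μ f + c`. -/
def BWeaklyAdditive (μ : BoundedContinuousFunction X ℝ → ℝ) : Prop :=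
  ∀ (f : BoundedContinuousFunction X ℝ) (c : ℝ),
    μ (f + BoundedContinuousFunction.const X c) = μ f + c

/-- `μ` *preserves min*. -/
def BPreservesMin (μ : BoundedContinuousFunction X ℝ → ℝ) : Prop :=
  ∀ f g : BoundedContinuousFunction X ℝ, μ (f ⊓ g) = min (μ f) (μ g)

/-- `μ` *preserves max*. -/
def BPreservesMax (μ : BoundedContinuousFunction X ℝ → ℝ) : Prop :=
  ∀ f g : BoundedContinuousFunction X ℝ, μ (f ⊔ g) = max (μ f) (μ g)

/-- `μ` *weakly preserves min*: `μ (min{f, c·1}) = min{μ f, c}`. -/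
def BWeaklyPreservesMin (μ : BoundedContinuousFunction X ℝ → ℝ) : Prop :=
  ∀ (f : BoundedContinuousFunction X ℝ) (c : ℝ),
    μ (f ⊓ BoundedContinuousFunction.const X c) = min (μ f) c

/-- `μ` *weakly preserves max*: `μ (max{f, c·1}) = max{μ f, c}`. -/
def BWeaklyPreservesMax (μ : BoundedContinuousFunction X ℝ → ℝ) : Prop :=
  ∀ (f : BoundedContinuousFunction X ℝ) (c : ℝ),
    μ (f ⊔ BoundedContinuousFunction.const X c) = max (μ f) c

/-- The support `S(μ) ⊆ βX` of a functional `μ` on `C*(X)`: points `p ∈ βX` such that every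
open neighbourhood `O` of `p` admits `f, g ∈ C*(X)` with `βf = βg` off `O` and `μ f ≠ μ g`. -/
def betaSupport (μ : BoundedContinuousFunction X ℝ → ℝ) : Set (StoneCech X) :=
  {p | ∀ O : Set (StoneCech X), IsOpen O → p ∈ O →
    ∃ f g : BoundedContinuousFunction X ℝ,
      (∀ q ∉ O, betaExt f q = betaExt g q) ∧ μ f ≠ μ g}

/-- `R_min(X)`: normed, weakly additive functionals preserving min and weakly preserving max. -/
def RMin (X : Type*) [TopologicalSpace X] : Set (BoundedContinuousFunction X ℝ → ℝ) :=
  {μ | BNormed μ ∧ BWeaklyAdditive μ ∧ BPreservesMin μ ∧ BWeaklyPreservesMax μ}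

/-- `R_max(X)`: normed, weakly additive functionals preserving max and weakly preserving min. -/
def RMax (X : Type*) [TopologicalSpace X] : Set (BoundedContinuousFunction X ℝ → ℝ) :=
  {μ | BNormed μ ∧ BWeaklyAdditive μ ∧ BPreservesMax μ ∧ BWeaklyPreservesMin μ}

/-- `R_min(X)_c`: members of `R_min(X)` with compact support, i.e. `∅ ≠ S(μ) ⊆ η(X)`. -/
def RMinC (X : Type*) [TopologicalSpace X] : Set (BoundedContinuousFunction X ℝ → ℝ) :=
  {μ | μ ∈ RMin X ∧ (betaSupport μ).Nonempty ∧
    betaSupport μ ⊆ Set.range (stoneCechUnit : X → StoneCech X)}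

/-- `R_max(X)_c`: members of `R_max(X)` with compact support, i.e. `∅ ≠ S(μ) ⊆ η(X)`. -/
def RMaxC (X : Type*) [TopologicalSpace X] : Set (BoundedContinuousFunction X ℝ → ℝ) :=
  {μ | μ ∈ RMax X ∧ (betaSupport μ).Nonempty ∧
    betaSupport μ ⊆ Set.range (stoneCechUnit : X → StoneCech X)}

section Stmt12Aux

open BoundedContinuousFunction

lemma betaExt_unit (f : BoundedContinuousFunction X ℝ) (x : X) :
    betaExt f (stoneCechUnit x) = f x :=
  congrArg Subtype.val (congrFun (stoneCechExtend_extends _) x)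

lemma continuous_betaExt (f : BoundedContinuousFunction X ℝ) : Continuous (betaExt f) :=
  continuous_subtype_val.comp (continuous_stoneCechExtend _)

lemma betaExt_eq {f : BoundedContinuousFunction X ℝ} {G : StoneCech X → ℝ}
    (hG : Continuous G) (h : ∀ x, G (stoneCechUnit x) = f x) :
    betaExt f = G :=
  stoneCech_hom_ext (continuous_betaExt f) hG (funext fun x => by
    simp only [Function.comp_apply, betaExt_unit, h x])

lemma bcf_le_iff {f g : BoundedContinuousFunction X ℝ} : f ≤ g ↔ ∀ x, f x ≤ g x := Iff.rfl

namespace Stmt12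

variable {ν : BoundedContinuousFunction X ℝ → ℝ}

lemma mono (h3 : BPreservesMin ν) {f g : BoundedContinuousFunction X ℝ}
    (hfg : f ≤ g) : ν f ≤ ν g := by
  have e : f ⊓ g = f := inf_eq_left.mpr hfg
  have h := h3 f g
  rw [e] at h
  exact h.le.trans (min_le_right _ _)

lemma eval_const (h1 : BNormed ν) (h2 : BWeaklyAdditive ν) (c : ℝ) :
    ν (BoundedContinuousFunction.const X c) = c := by
  have h0 : ν 0 = 0 := by
    have h := h2 0 1
    have e : (0 : BoundedContinuousFunction X ℝ) + BoundedContinuousFunction.const X 1 = 1 := by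
      ext x; simp
    rw [e, h1] at h
    linarith
  have h := h2 0 c
  have e : (0 : BoundedContinuousFunction X ℝ) + BoundedContinuousFunction.const X c
      = BoundedContinuousFunction.const X c := by ext x; simp
  rw [e, h0] at h
  linarith

lemma eval_zero (h1 : BNormed ν) (h2 : BWeaklyAdditive ν) : ν 0 = 0 := by
  have := eval_const h1 h2 (0 : ℝ)
  have e : BoundedContinuousFunction.const X (0:ℝ) = 0 := by ext x; simp
  rwa [e] at this

lemma eval_le_norm (h1 : BNormed ν) (h2 : BWeaklyAdditive ν) (h3 : BPreservesMin ν)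
    (f : BoundedContinuousFunction X ℝ) : ν f ≤ ‖f‖ := by
  have hle : f ≤ BoundedContinuousFunction.const X ‖f‖ := by
    refine bcf_le_iff.mpr fun x => ?_
    have h := f.norm_coe_le_norm x
    rw [Real.norm_eq_abs] at h
    have : f x ≤ ‖f‖ := (le_abs_self _).trans h
    simpa using this
  have := mono h3 hle
  rwa [eval_const h1 h2] at this

/-- Doubling: for `0 ≤ h`, `2 ν h ≤ ν (h + h)`. -/
lemma double_ge (h1 : BNormed ν) (h2 : BWeaklyAdditive ν) (h3 : BPreservesMin ν)
    (h4 : BWeaklyPreservesMax ν) {h : BoundedContinuousFunction X ℝ}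
    (hh : (0 : BoundedContinuousFunction X ℝ) ≤ h) : 2 * ν h ≤ ν (h + h) := by
  have h0 : ν 0 = 0 := eval_zero h1 h2
  have hv0 : 0 ≤ ν h := h0 ▸ mono h3 hh
  have hhh : (0 : BoundedContinuousFunction X ℝ) ≤ h + h := by
    refine bcf_le_iff.mpr fun x => ?_
    have := bcf_le_iff.mp hh x
    simp only [BoundedContinuousFunction.coe_zero, Pi.zero_apply] at this
    simp only [BoundedContinuousFunction.coe_add, Pi.add_apply,
      BoundedContinuousFunction.coe_zero, Pi.zero_apply]
    linarith
  have ha0 : 0 ≤ ν (h + h) := h0 ▸ mono h3 hhh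
  set a : ℝ := ν (h + h) with ha
  set w : BoundedContinuousFunction X ℝ :=
    (h + h + BoundedContinuousFunction.const X (-a)) ⊔ BoundedContinuousFunction.const X 0 with hw
  set z : BoundedContinuousFunction X ℝ := w ⊓ h with hz
  have c1 : ν (h + h + BoundedContinuousFunction.const X (-a)) = 0 := by
    rw [h2, ← ha]; ring
  have c2 : ν w = 0 := by
    have e : BoundedContinuousFunction.const X (0:ℝ) = 0 := by ext x; simp
    rw [hw, ← e] at *
    rw [h4, c1]; simp
  have c3 : ν z = 0 := by
    rw [hz, h3, c2]
    exact min_eq_left hv0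
  have hpt : h + BoundedContinuousFunction.const X (-(a/2)) ≤ z := by
    refine bcf_le_iff.mpr fun x => ?_
    have hx0 : 0 ≤ h x := by
      have := bcf_le_iff.mp hh x
      simpa using this
    simp only [hz, hw, BoundedContinuousFunction.coe_inf, BoundedContinuousFunction.coe_sup,
      BoundedContinuousFunction.coe_add, BoundedContinuousFunction.const_apply,
      Pi.inf_apply, Pi.sup_apply, Pi.add_apply, le_min_iff, le_max_iff]
    constructor
    · rcases le_total (h x) (a / 2) with hc | hc
      · right; linarith
      · left; linarith
    · linarith
  have c4 := mono h3 hpt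
  rw [h2, c3] at c4
  linarith

/-- Iterated doubling. -/
lemma pow_ge (h1 : BNormed ν) (h2 : BWeaklyAdditive ν) (h3 : BPreservesMin ν)
    (h4 : BWeaklyPreservesMax ν) {k : BoundedContinuousFunction X ℝ}
    (hk : (0 : BoundedContinuousFunction X ℝ) ≤ k) (m : ℕ) :
    ∃ K : BoundedContinuousFunction X ℝ, (0 : BoundedContinuousFunction X ℝ) ≤ K ∧
      (∀ x, k x = 0 → K x = 0) ∧ (2 : ℝ) ^ m * ν k ≤ ν K := by
  induction m with
  | zero => exact ⟨k, hk, fun x hx => hx, by norm_num⟩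
  | succ m ih =>
    obtain ⟨K, hK0, hKz, hKν⟩ := ih
    refine ⟨K + K, ?_, ?_, ?_⟩
    · refine bcf_le_iff.mpr fun x => ?_
      have := bcf_le_iff.mp hK0 x
      simp only [BoundedContinuousFunction.coe_zero, Pi.zero_apply] at this
      simp only [BoundedContinuousFunction.coe_add, Pi.add_apply,
        BoundedContinuousFunction.coe_zero, Pi.zero_apply]
      linarith
    · intro x hx
      simp only [BoundedContinuousFunction.coe_add, Pi.add_apply, hKz x hx]
      ring
    · have hd := double_ge h1 h2 h3 h4 hK0
      calc (2:ℝ) ^ (m+1) * ν k = 2 * ((2:ℝ)^m * ν k) := by ring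
      _ ≤ 2 * ν K := by linarith
      _ ≤ ν (K + K) := hd

/-- Nullity: if `k ≥ 0`, `βk = 0` on `V` and `ν k > 1/2`, then any two functions whose
extensions agree off `V` get the same value from `ν`. -/
lemma null_of_test (h1 : BNormed ν) (h2 : BWeaklyAdditive ν) (h3 : BPreservesMin ν)
    (h4 : BWeaklyPreservesMax ν) {V : Set (StoneCech X)} {k : BoundedContinuousFunction X ℝ}
    (hk0 : (0 : BoundedContinuousFunction X ℝ) ≤ k)
    (hkV : ∀ q ∈ V, betaExt k q = 0) (hνk : (1:ℝ)/2 < ν k)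
    (f g : BoundedContinuousFunction X ℝ)
    (hfg : ∀ q ∉ V, betaExt f q = betaExt g q) : ν f = ν g := by
  set M : ℝ := max ‖f‖ ‖g‖ with hM
  have hM0 : 0 ≤ M := le_trans (norm_nonneg f) (le_max_left _ _)
  obtain ⟨m, hm⟩ : ∃ m : ℕ, 2 * M + 1 < 2 ^ m * ν k := by
    obtain ⟨m, hm⟩ := pow_unbounded_of_one_lt (2 * (2 * M + 1)) (by norm_num : (1:ℝ) < 2)
    refine ⟨m, ?_⟩
    have hp : (0:ℝ) < 2 ^ m := pow_pos (by norm_num) m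
    nlinarith
  obtain ⟨K, hK0, hKz, hKν⟩ := pow_ge h1 h2 h3 h4 hk0 m
  set w : BoundedContinuousFunction X ℝ := K + BoundedContinuousFunction.const X (-M) with hw
  have hfx : ∀ x, -M ≤ f x := by
    intro x
    have h' := abs_le.mp (((Real.norm_eq_abs (f x)) ▸ f.norm_coe_le_norm x).trans
      (le_max_left ‖f‖ ‖g‖))
    exact h'.1
  have hgx : ∀ x, -M ≤ g x := by
    intro x
    have h' := abs_le.mp (((Real.norm_eq_abs (g x)) ▸ g.norm_coe_le_norm x).trans
      (le_max_right ‖f‖ ‖g‖))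
    exact h'.1
  have key : f ⊓ w = g ⊓ w := by
    ext x
    simp only [BoundedContinuousFunction.coe_inf, Pi.inf_apply, hw,
      BoundedContinuousFunction.coe_add, Pi.add_apply,
      BoundedContinuousFunction.const_apply]
    rcases eq_or_lt_of_le (bcf_le_iff.mp hk0 x) with hk | hk
    · have hkx0 : k x = 0 := by simpa using hk.symm
      have hKx : K x = 0 := hKz x hkx0
      rw [hKx, zero_add, min_eq_right (hfx x), min_eq_right (hgx x)]
    · have hx : stoneCechUnit x ∉ V := by
        intro hmem
        have h0 := hkV _ hmem
        rw [betaExt_unit] at h0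
        simp only [BoundedContinuousFunction.coe_zero, Pi.zero_apply] at hk
        linarith
      have hfgx := hfg _ hx
      rw [betaExt_unit, betaExt_unit] at hfgx
      rw [hfgx]
  have e1 := h3 f w
  have e2 := h3 g w
  rw [key] at e1
  have hwv : ν w = ν K - M := by rw [hw, h2]; ring
  have hbig : M < ν w := by rw [hwv]; linarith
  have hf' : ν f ≤ M := (eval_le_norm h1 h2 h3 f).trans (le_max_left _ _)
  have hg' : ν g ≤ M := (eval_le_norm h1 h2 h3 g).trans (le_max_right _ _)
  have : min (ν f) (ν w) = min (ν g) (ν w) := by rw [← e1, ← e2]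
  rwa [min_eq_left (by linarith), min_eq_left (by linarith)] at this

/-- Per-point construction of a test function witnessing local nullity of `μ`. -/
lemma exists_test (h1 : BNormed ν) (h2 : BWeaklyAdditive ν) (h3 : BPreservesMin ν)
    (h4 : BWeaklyPreservesMax ν) {p : StoneCech X} (hp : p ∉ betaSupport ν) :
    ∃ (V : Set (StoneCech X)) (k : BoundedContinuousFunction X ℝ),
      IsOpen V ∧ p ∈ V ∧ (0 : BoundedContinuousFunction X ℝ) ≤ k ∧
      (∀ q ∈ V, betaExt k q = 0) ∧ ν k = 1 := by
  simp only [betaSupport, mem_setOf_eq] at hp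
  push_neg at hp
  obtain ⟨O, hOopen, hpO, hO⟩ := hp
  have hO' := hO
  obtain ⟨H, hH0, hH1, hH01⟩ := exists_continuous_zero_one_of_isClosed
    (hOopen.isClosed_compl) (isClosed_singleton (x := p))
    (Set.disjoint_singleton_right.mpr (fun hmem => hmem hpO))
  set Cfun : StoneCech X → ℝ := fun q => max (1 - 2 * H q) 0 with hCdef
  have hCcont : Continuous Cfun :=
    (continuous_const.sub (continuous_const.mul H.continuous)).max continuous_const
  have hC01 : ∀ q, Cfun q ∈ Set.Icc (0:ℝ) 1 := by
    intro q
    have h01 := hH01 q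
    constructor
    · exact le_max_right _ _
    · have : 1 - 2 * H q ≤ 1 := by linarith [h01.1]
      exact max_le this (by norm_num)
  set k : BoundedContinuousFunction X ℝ :=
    ⟨⟨fun x => Cfun (stoneCechUnit x), hCcont.comp continuous_stoneCechUnit⟩, 1, by
      intro x y
      obtain ⟨hx1, hx2⟩ := hC01 (stoneCechUnit x)
      obtain ⟨hy1, hy2⟩ := hC01 (stoneCechUnit y)
      rw [Real.dist_eq, abs_le]
      constructor <;> simp only [ContinuousMap.coe_mk] <;> linarith⟩ with hkdef
  have hkext : betaExt k = Cfun := betaExt_eq hCcont (fun x => rfl)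
  refine ⟨{q | (1:ℝ)/2 < H q}, k, ?_, ?_, ?_, ?_, ?_⟩
  · exact isOpen_lt continuous_const H.continuous
  · have : H p = 1 := hH1 rfl
    simp only [mem_setOf_eq, this]
    norm_num
  · refine bcf_le_iff.mpr fun x => ?_
    have := (hC01 (stoneCechUnit x)).1
    exact this
  · intro q hq
    rw [hkext]
    simp only [mem_setOf_eq] at hq
    have : 1 - 2 * H q < 0 := by linarith
    exact max_eq_right this.le
  · have hone : ν k = ν 1 := by
      apply hO' k 1
      intro q hq
      have h1ext : betaExt (1 : BoundedContinuousFunction X ℝ) = fun _ => (1:ℝ) :=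
        betaExt_eq continuous_const (fun x => by simp)
      rw [hkext, h1ext]
      have hq0 : H q = 0 := hH0 hq
      simp only [hCdef, hq0]
      norm_num
    rw [hone, h1]

end Stmt12

end Stmt12Aux

/-- the support map on `R_min(X)` is upper semicontinuous: for each open
`U ⊆ βX`, the set `{μ ∈ R_min(X) : S(μ) ⊆ U}` is open in `R_min(X)` (with the subspace
topology inherited from the product topology of pointwise convergence). -/
theorem statement12 (X : Type*) [TopologicalSpace X] [T35Space X] :
    ∀ U : Set (StoneCech X), IsOpen U →
      IsOpen {ν : RMin X | betaSupport (ν : BoundedContinuousFunction X ℝ → ℝ) ⊆ U} := by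
  intro U hU
  rw [isOpen_iff_mem_nhds]
  rintro ⟨μ, hμ⟩ hμU
  obtain ⟨h1, h2, h3, h4⟩ := hμ
  simp only [mem_setOf_eq] at hμU
  have hchoice : ∀ p : (Uᶜ : Set (StoneCech X)),
      ∃ (V : Set (StoneCech X)) (k : BoundedContinuousFunction X ℝ),
        IsOpen V ∧ (p : StoneCech X) ∈ V ∧ (0 : BoundedContinuousFunction X ℝ) ≤ k ∧
        (∀ q ∈ V, betaExt k q = 0) ∧ μ k = 1 :=
    fun p => Stmt12.exists_test h1 h2 h3 h4 (fun hmem => p.2 (hμU hmem))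
  choose V k hVopen hpV hk0 hkV hμk using hchoice
  have hKcomp : IsCompact (Uᶜ) := hU.isClosed_compl.isCompact
  have hcover : Uᶜ ⊆ ⋃ p : (Uᶜ : Set (StoneCech X)), V p :=
    fun q hq => mem_iUnion.mpr ⟨⟨q, hq⟩, hpV _⟩
  obtain ⟨t, ht⟩ := hKcomp.elim_finite_subcover V hVopen hcover
  refine mem_nhds_iff.mpr ⟨Subtype.val ⁻¹'
    (⋂ i ∈ t, (fun φ : BoundedContinuousFunction X ℝ → ℝ => φ (k i)) ⁻¹' Set.Ioi ((1:ℝ)/2)),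
    ?_, ?_, ?_⟩
  · rintro ⟨ν, hν⟩ hνW
    simp only [mem_preimage, mem_iInter, mem_setOf_eq, mem_Ioi] at hνW
    obtain ⟨n1, n2, n3, n4⟩ := hν
    simp only [mem_setOf_eq]
    intro r hr
    by_contra hrU
    obtain ⟨i, hit, hriV⟩ := mem_iUnion₂.mp (ht hrU)
    obtain ⟨f, g, hfg, hne⟩ := hr (V i) (hVopen i) hriV
    exact hne (Stmt12.null_of_test n1 n2 n3 n4 (hk0 i) (hkV i) (hνW i hit) f g hfg)
  · exact (isOpen_biInter_finset (fun i _ =>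
      (isOpen_Ioi).preimage (continuous_apply (k i)))).preimage continuous_subtype_val
  · simp only [mem_preimage, mem_iInter, mem_setOf_eq, mem_Ioi]
    intro i _
    rw [hμk i]
    norm_num
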